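/- For every Boolean function f: {0,1}^n → {0,1}, there exists a restriction ρ with |ρ^{-1}(*)| = O(D(f)) such that D(f|_ρ) = Ω(√(D(f))), where D denotes deterministic decision tree (query) complexity. -/

import Mathlib

open Finset

section Core
variable {ι : Type} [Fintype ι] [DecidableEq ι]

/-- Flip the bits of `x` indexed by the block `B`. -/
def flipSet (x : ι → Bool) (B : Finset ι) : ι → Bool :=
  fun i => if i ∈ B then !(x i) else x i

/-- Sensitivity of `f` at input `x`. -/
def sensAt (f : (ι → Bool) → Bool) (x : ι → Bool) : ℕ :=
  (univ.filter fun i => f (flipSet x {i}) ≠ f x).card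

/-- Sensitivity of `f`. -/
def sens (f : (ι → Bool) → Bool) : ℕ :=
  univ.sup fun x => sensAt f x

/-- Block sensitivity of `f` at `x`: the maximal number of pairwise disjoint
sensitive blocks at `x`. -/
noncomputable def bsAt (f : (ι → Bool) → Bool) (x : ι → Bool) : ℕ :=
  sSup {r | ∃ B : Fin r → Finset ι,
    (∀ j, f (flipSet x (B j)) ≠ f x) ∧
    ∀ j₁ j₂, j₁ ≠ j₂ → Disjoint (B j₁) (B j₂)}

/-- Block sensitivity of `f`. -/
noncomputable def blockSens (f : (ι → Bool) → Bool) : ℕ :=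
  univ.sup fun x => bsAt f x

/-- `S` is a certificate for `f` at `x`: every input agreeing with `x` on `S`
 has the same `f`-value as `x`. -/
def IsCert (f : (ι → Bool) → Bool) (x : ι → Bool) (S : Finset ι) : Prop :=
  ∀ y : ι → Bool, (∀ i ∈ S, y i = x i) → f y = f x

/-- Certificate complexity of `f` at `x`. -/
noncomputable def certAt (f : (ι → Bool) → Bool) (x : ι → Bool) : ℕ :=
  sInf {c | ∃ S : Finset ι, S.card = c ∧ IsCert f x S}

/-- Certificate complexity of `f`. -/
noncomputable def certC (f : (ι → Bool) → Bool) : ℕ :=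
  univ.sup fun x => certAt f x

/-- 0-certificate complexity of `f`. -/
noncomputable def cert0 (f : (ι → Bool) → Bool) : ℕ :=
  (univ.filter fun x => f x = false).sup fun x => certAt f x

/-- 1-certificate complexity of `f`. -/
noncomputable def cert1 (f : (ι → Bool) → Bool) : ℕ :=
  (univ.filter fun x => f x = true).sup fun x => certAt f x

/-- The restriction of `f` by the partial assignment `ρ` (a variable `i` with
`ρ i = none` is left unset; otherwise it is fixed to the given value). The
restricted function depends only on the unset variables. -/
def restrictBF (f : (ι → Bool) → Bool) (ρ : ι → Option Bool) : (ι → Bool) → Bool :=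
  fun x => f fun i => (ρ i).getD (x i)

/-- Number of unset variables of a partial assignment. -/
def unsetCard (ρ : ι → Option Bool) : ℕ :=
  (univ.filter fun i => ρ i = none).card

end Core

/-- Deterministic decision trees over variables indexed by `ι`. -/
inductive DTree (ι : Type) where
  | leaf : Bool → DTree ι
  | node : ι → DTree ι → DTree ι → DTree ι

/-- Evaluation of a decision tree on an input. -/
def DTree.eval {ι : Type} : DTree ι → (ι → Bool) → Bool
  | .leaf b, _ => b
  | .node i t0 t1, x => if x i then t1.eval x else t0.eval x

/-- Depth (worst-case number of queries) of a decision tree. -/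
def DTree.depth {ι : Type} : DTree ι → ℕ
  | .leaf _ => 0
  | .node _ t0 t1 => max t0.depth t1.depth + 1

/-- Deterministic query (decision tree) complexity. -/
noncomputable def Dquery {ι : Type} (f : (ι → Bool) → Bool) : ℕ :=
  sInf {d | ∃ T : DTree ι, T.depth ≤ d ∧ ∀ x, T.eval x = f x}

section Aux
variable {ι : Type} [Fintype ι] [DecidableEq ι]
set_option linter.unusedSectionVars false

/-- single-variable restriction -/
def sing (i : ι) (b : Bool) : ι → Option Bool := fun j => if j = i then some b else none

/-- full decision tree over a list of variables -/
def treeOn : List ι → ((ι → Bool) → Bool) → DTree ι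
  | [], f => .leaf (f fun _ => false)
  | i :: l, f => .node i (treeOn l (restrictBF f (sing i false)))
                         (treeOn l (restrictBF f (sing i true)))

lemma treeOn_depth (l : List ι) (f : (ι → Bool) → Bool) : (treeOn l f).depth ≤ l.length := by
  induction l generalizing f with
  | nil => simp [treeOn, DTree.depth]
  | cons i l ih =>
    simp only [treeOn, DTree.depth, List.length_cons]
    have := ih (restrictBF f (sing i false))
    have := ih (restrictBF f (sing i true))
    omega

lemma treeOn_eval (l : List ι) (f : (ι → Bool) → Bool)
    (hf : ∀ x y : ι → Bool, (∀ i ∈ l, x i = y i) → f x = f y) (x : ι → Bool) :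
    (treeOn l f).eval x = f x := by
  induction l generalizing f with
  | nil =>
    show f (fun _ => false) = f x
    exact hf _ x (by simp)
  | cons i l ih =>
    have key : ∀ b : Bool, x i = b → (treeOn l (restrictBF f (sing i b))).eval x = f x := by
      intro b hb
      have h1 : ∀ u v : ι → Bool, (∀ j ∈ l, u j = v j) →
          restrictBF f (sing i b) u = restrictBF f (sing i b) v := by
        intro u v huv
        apply hf
        intro j hj
        rcases List.mem_cons.1 hj with h | h
        · subst h; simp [sing]
        · by_cases hji : j = i
          · subst hji; simp [sing]
          · simp [sing, hji, huv j h]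
      have := ih (restrictBF f (sing i b)) h1
      rw [this]
      have : (fun j => (sing i b j).getD (x j)) = x := by
        funext j
        by_cases hji : j = i
        · subst hji; simp [sing, hb]
        · simp [sing, hji]
      simp only [restrictBF, this]
    simp only [treeOn, DTree.eval]
    by_cases hb : x i
    · simp [hb, key true hb]
    · simp [hb, key false (by simp [hb])]

lemma dquery_set_nonempty (f : (ι → Bool) → Bool) :
    {d | ∃ T : DTree ι, T.depth ≤ d ∧ ∀ x, T.eval x = f x}.Nonempty := by
  refine ⟨(Fintype.card ι), ⟨treeOn (univ.toList) f, ?_, ?_⟩⟩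
  · simpa using treeOn_depth univ.toList f
  · intro x
    exact treeOn_eval _ f (fun x y h => congrArg f (funext fun i => h i (by simp))) x

lemma exists_opt_tree (f : (ι → Bool) → Bool) :
    ∃ T : DTree ι, T.depth ≤ Dquery f ∧ ∀ x, T.eval x = f x :=
  Nat.sInf_mem (dquery_set_nonempty f)

lemma Dquery_le_of_tree {f : (ι → Bool) → Bool} (T : DTree ι) (h : ∀ x, T.eval x = f x) :
    Dquery f ≤ T.depth :=
  Nat.sInf_le ⟨T, le_rfl, h⟩

lemma Dquery_le_card (f : (ι → Bool) → Bool) : Dquery f ≤ Fintype.card ι := by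
  apply Nat.sInf_le
  refine ⟨treeOn (univ.toList) f, by simpa using treeOn_depth univ.toList f, fun x =>
    treeOn_eval _ f (fun x y h => congrArg f (funext fun i => h i (by simp))) x⟩

end Aux

section Aux2
variable {ι : Type} [Fintype ι] [DecidableEq ι]
set_option linter.unusedSectionVars false

def DTree.queries : DTree ι → (ι → Bool) → Finset ι
  | .leaf _, _ => ∅
  | .node i t0 t1, x => insert i (if x i then t1.queries x else t0.queries x)

lemma queries_card (T : DTree ι) (x : ι → Bool) : (T.queries x).card ≤ T.depth := by
  induction T with
  | leaf b => simp [DTree.queries, DTree.depth]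
  | node i t0 t1 ih0 ih1 =>
    show (insert i (if x i then t1.queries x else t0.queries x)).card ≤ max t0.depth t1.depth + 1
    refine (Finset.card_insert_le _ _).trans ?_
    by_cases h : x i
    · rw [if_pos h]; have := ih1; omega
    · rw [if_neg h]; have := ih0; omega

lemma queries_cert (T : DTree ι) (x y : ι → Bool)
    (h : ∀ i ∈ T.queries x, y i = x i) : T.eval y = T.eval x := by
  induction T with
  | leaf b => rfl
  | node i t0 t1 ih0 ih1 =>
    have hq : DTree.queries (.node i t0 t1) x = insert i (if x i then t1.queries x else t0.queries x) := rfl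
    have hxy : y i = x i := h i (by rw [hq]; exact Finset.mem_insert_self _ _)
    simp only [DTree.eval, hxy]
    by_cases hb : x i
    · simp only [hb, if_true]
      exact ih1 (fun j hj => h j (by rw [hq, if_pos hb]; exact Finset.mem_insert_of_mem hj))
    · simp only [hb, if_false]
      exact ih0 (fun j hj => h j (by rw [hq, if_neg hb]; exact Finset.mem_insert_of_mem hj))

lemma bs_set_bdd (f : (ι → Bool) → Bool) (x : ι → Bool) :
    ∀ r ∈ {r | ∃ B : Fin r → Finset ι,
      (∀ j, f (flipSet x (B j)) ≠ f x) ∧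
      ∀ j₁ j₂, j₁ ≠ j₂ → Disjoint (B j₁) (B j₂)}, r ≤ Fintype.card ι := by
  rintro r ⟨B, hsen, hdis⟩
  have hne : ∀ j, (B j).Nonempty := by
    intro j
    rcases Finset.eq_empty_or_nonempty (B j) with h | h
    · have he : flipSet x (∅ : Finset ι) = x := funext fun i => by simp [flipSet]
      exact absurd (by rw [h, he]) (hsen j)
    · exact h
  have : Function.Injective (fun j => (hne j).choose) := by
    intro j₁ j₂ hj
    by_contra hne'
    have hd := hdis j₁ j₂ hne'
    have h2 : (hne j₁).choose = (hne j₂).choose := hj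
    exact (Finset.disjoint_left.1 hd) (hne j₁).choose_spec (h2 ▸ (hne j₂).choose_spec)
  simpa using Fintype.card_le_of_injective _ this

lemma bs_set_nonempty (f : (ι → Bool) → Bool) (x : ι → Bool) :
    (0:ℕ) ∈ {r | ∃ B : Fin r → Finset ι,
      (∀ j, f (flipSet x (B j)) ≠ f x) ∧
      ∀ j₁ j₂, j₁ ≠ j₂ → Disjoint (B j₁) (B j₂)} :=
  ⟨fun j => j.elim0, fun j => j.elim0, fun j => j.elim0⟩

lemma bsAt_le (f : (ι → Bool) → Bool) (x : ι → Bool) {m : ℕ}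
    (h : ∀ r, ∀ B : Fin r → Finset ι,
      (∀ j, f (flipSet x (B j)) ≠ f x) →
      (∀ j₁ j₂, j₁ ≠ j₂ → Disjoint (B j₁) (B j₂)) → r ≤ m) : bsAt f x ≤ m := by
  apply csSup_le ⟨0, bs_set_nonempty f x⟩
  rintro r ⟨B, h1, h2⟩
  exact h r B h1 h2

lemma le_bsAt (f : (ι → Bool) → Bool) (x : ι → Bool) {r : ℕ} (B : Fin r → Finset ι)
    (h1 : ∀ j, f (flipSet x (B j)) ≠ f x)
    (h2 : ∀ j₁ j₂, j₁ ≠ j₂ → Disjoint (B j₁) (B j₂)) : r ≤ bsAt f x :=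
  le_csSup ⟨Fintype.card ι, fun r hr => bs_set_bdd f x r hr⟩ ⟨B, h1, h2⟩

lemma bsAt_spec (f : (ι → Bool) → Bool) (x : ι → Bool) :
    ∃ B : Fin (bsAt f x) → Finset ι,
      (∀ j, f (flipSet x (B j)) ≠ f x) ∧
      ∀ j₁ j₂, j₁ ≠ j₂ → Disjoint (B j₁) (B j₂) :=
  Nat.sSup_mem ⟨0, bs_set_nonempty f x⟩ ⟨Fintype.card ι, fun r hr => bs_set_bdd f x r hr⟩

lemma bsAt_le_Dquery (f : (ι → Bool) → Bool) (x : ι → Bool) : bsAt f x ≤ Dquery f := by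
  obtain ⟨T, hd, hT⟩ := exists_opt_tree f
  refine le_trans (bsAt_le f x ?_) hd |>.trans le_rfl
  intro r B h1 h2
  -- each block meets the query set
  have hmeet : ∀ j, ∃ i, i ∈ B j ∧ i ∈ T.queries x := by
    intro j
    by_contra hc
    push_neg at hc
    have : T.eval (flipSet x (B j)) = T.eval x := by
      apply queries_cert
      intro i hi
      simp only [flipSet]
      rw [if_neg]
      intro hmem
      exact hc i hmem hi
    rw [hT, hT] at this
    exact h1 j this
  choose e he1 he2 using hmeet
  have hinj : Function.Injective e := by
    intro j₁ j₂ hj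
    by_contra hne
    have h1' : e j₁ ∈ B j₂ := hj ▸ he1 j₂
    exact (Finset.disjoint_left.1 (h2 j₁ j₂ hne)) (he1 j₁) h1'
  have : r ≤ (T.queries x).card := by
    have := Fintype.card_le_of_injective (fun j => (⟨e j, he2 j⟩ : {i // i ∈ T.queries x}))
      (fun a b hab => hinj (by simpa using hab))
    simpa using this
  exact this.trans (queries_card T x)

lemma blockSens_le_Dquery (f : (ι → Bool) → Bool) : blockSens f ≤ Dquery f :=
  Finset.sup_le fun x _ => bsAt_le_Dquery f x

end Aux2

section Aux3
variable {ι : Type} [Fintype ι] [DecidableEq ι]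
set_option linter.unusedSectionVars false

def bval (b : Bool) : ℤ := if b then 1 else 0

lemma bval_inj {a b : Bool} (h : bval a = bval b) : a = b := by
  cases a <;> cases b <;> simp [bval] at h ⊢

def monom (S : Finset ι) (x : ι → Bool) : ℤ := ∏ i ∈ S, bval (x i)

def BRep (p : Finset ι → ℤ) (f : (ι → Bool) → Bool) : Prop :=
  ∀ x, ∑ S ∈ univ.powerset, p S * monom S x = bval (f x)

def degBound (p : Finset ι → ℤ) (d : ℕ) : Prop := ∀ S, p S ≠ 0 → S.card ≤ d

lemma mono_indicator (S T : Finset ι) :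
    monom S (fun i => decide (i ∈ T)) = if S ⊆ T then 1 else 0 := by
  by_cases h : S ⊆ T
  · rw [if_pos h]; apply Finset.prod_eq_one; intro i hi; simp [bval, h hi]
  · rw [if_neg h]
    obtain ⟨i, hiS, hiT⟩ := Finset.not_subset.1 h
    exact Finset.prod_eq_zero hiS (by simp [bval, hiT])

lemma rep_eval_indicator (p : Finset ι → ℤ) (S : Finset ι) :
    ∑ T ∈ univ.powerset, p T * monom T (fun i => decide (i ∈ S)) = ∑ T ∈ S.powerset, p T := by
  have hps : S.powerset = univ.powerset.filter (· ⊆ S) := by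
    ext T; simp [Finset.mem_powerset, Finset.mem_filter]
  rw [hps, Finset.sum_filter]
  apply Finset.sum_congr rfl
  intro T _
  rw [mono_indicator]
  by_cases h : T ⊆ S <;> simp [h]

lemma rep_unique {p q : Finset ι → ℤ} {f : (ι → Bool) → Bool} (hp : BRep p f) (hq : BRep q f) :
    p = q := by
  have key : ∀ S : Finset ι, ∑ T ∈ S.powerset, p T = ∑ T ∈ S.powerset, q T := by
    intro S
    rw [← rep_eval_indicator p S, ← rep_eval_indicator q S, hp, hq]
  have main : ∀ m : ℕ, ∀ S : Finset ι, S.card ≤ m → p S = q S := by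
    intro m
    induction m with
    | zero =>
      intro S hS
      have hS0 : S = ∅ := Finset.card_eq_zero.1 (Nat.le_zero.1 hS)
      subst hS0
      simpa [Finset.powerset_empty] using key ∅
    | succ m ih =>
      intro S hS
      have h1 : ∑ T ∈ S.powerset.erase S, p T = ∑ T ∈ S.powerset.erase S, q T := by
        apply Finset.sum_congr rfl
        intro T hT
        rw [Finset.mem_erase, Finset.mem_powerset] at hT
        have hss : T ⊂ S := lt_of_le_of_ne hT.2 hT.1
        exact ih T (by have := Finset.card_lt_card hss; omega)
      have h2 := key S
      have hmem : S ∈ S.powerset := Finset.mem_powerset_self S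
      rw [← Finset.add_sum_erase _ p hmem, ← Finset.add_sum_erase _ q hmem, h1] at h2
      exact add_right_cancel h2
  funext S
  exact main S.card S le_rfl

lemma rep_const (b : Bool) :
    BRep (fun S => if S = (∅ : Finset ι) then bval b else 0) (fun _ => b) := by
  intro x
  rw [Finset.sum_eq_single_of_mem (∅ : Finset ι) (Finset.empty_mem_powerset _)]
  · simp [monom]
  · intro S _ hS
    show (if S = ∅ then bval b else 0) * monom S x = 0
    rw [if_neg hS, zero_mul]

lemma pmul_rep (i : ι) (p : Finset ι → ℤ) (x : ι → Bool) :
    ∑ S ∈ univ.powerset, (if i ∈ S then p S + p (S.erase i) else 0) * monom S x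
      = bval (x i) * ∑ S ∈ univ.powerset, p S * monom S x := by
  by_cases hx : x i
  case neg =>
    have h0 : bval (x i) = 0 := by simp [bval, hx]
    rw [h0, zero_mul]
    apply Finset.sum_eq_zero
    intro S _
    by_cases hiS : i ∈ S
    · rw [if_pos hiS]
      have hm : monom S x = 0 := Finset.prod_eq_zero hiS (by simp [bval, hx])
      rw [hm, mul_zero]
    · rw [if_neg hiS, zero_mul]
  case pos =>
    have h1 : bval (x i) = 1 := by simp [bval, hx]
    rw [h1, one_mul]
    rw [← Finset.sum_filter_add_sum_filter_not univ.powerset (fun S => i ∈ S)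
      (fun S => p S * monom S x)]
    have hL : ∑ S ∈ univ.powerset, (if i ∈ S then p S + p (S.erase i) else 0) * monom S x
        = ∑ S ∈ univ.powerset.filter (fun S => i ∈ S), (p S + p (S.erase i)) * monom S x := by
      rw [Finset.sum_filter]
      apply Finset.sum_congr rfl
      intro S _
      by_cases hiS : i ∈ S <;> simp [hiS]
    rw [hL]
    have hsplit : ∀ S ∈ univ.powerset.filter (fun S => i ∈ S),
        (p S + p (S.erase i)) * monom S x
          = p S * monom S x + p (S.erase i) * monom (S.erase i) x := by
      intro S hS
      rw [Finset.mem_filter] at hS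
      have hmono : monom S x = monom (S.erase i) x := by
        unfold monom
        rw [← Finset.mul_prod_erase S _ hS.2]
        simp [bval, hx]
      rw [hmono]; ring
    rw [Finset.sum_congr rfl hsplit, Finset.sum_add_distrib]
    congr 1
    apply Finset.sum_nbij' (fun S => S.erase i) (fun S => insert i S)
    · intro S hS
      rw [Finset.mem_filter] at hS ⊢
      exact ⟨Finset.mem_powerset.2 ((Finset.erase_subset _ _).trans (Finset.mem_powerset.1 hS.1)),
        by simp⟩
    · intro S hS
      rw [Finset.mem_filter] at hS ⊢
      refine ⟨Finset.mem_powerset.2 (Finset.subset_univ _), by simp⟩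
    · intro S hS
      rw [Finset.mem_filter] at hS
      exact Finset.insert_erase hS.2
    · intro S hS
      rw [Finset.mem_filter] at hS
      exact Finset.erase_insert hS.2
    · intro S hS
      rfl

lemma rep_node (i : ι) {p0 p1 : Finset ι → ℤ} {g0 g1 : (ι → Bool) → Bool}
    (h0 : BRep p0 g0) (h1 : BRep p1 g1) :
    BRep (fun S => p0 S +
        (if i ∈ S then (p1 S - p0 S) + (p1 (S.erase i) - p0 (S.erase i)) else 0))
      (fun x => if x i then g1 x else g0 x) := by
  intro x
  have hdist : ∀ S ∈ univ.powerset,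
      (p0 S + (if i ∈ S then (p1 S - p0 S) + (p1 (S.erase i) - p0 (S.erase i)) else 0)) * monom S x
        = p0 S * monom S x +
          (if i ∈ S then (fun T => p1 T - p0 T) S + (fun T => p1 T - p0 T) (S.erase i) else 0)
            * monom S x := by
    intro S _; ring
  rw [Finset.sum_congr rfl hdist, Finset.sum_add_distrib, h0, pmul_rep]
  have hsub : ∑ S ∈ univ.powerset, (fun T => p1 T - p0 T) S * monom S x
      = bval (g1 x) - bval (g0 x) := by
    have : ∀ S ∈ univ.powerset, (p1 S - p0 S) * monom S x
        = p1 S * monom S x - p0 S * monom S x := by intro S _; ring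
    rw [Finset.sum_congr rfl this, Finset.sum_sub_distrib, h0, h1]
  rw [hsub]
  by_cases hx : x i <;> simp [bval, hx] <;> ring

lemma tree_rep (T : DTree ι) : ∃ p, BRep p T.eval ∧ degBound p T.depth := by
  induction T with
  | leaf b =>
    refine ⟨_, rep_const b, ?_⟩
    intro S hS
    replace hS : (if S = (∅:Finset ι) then bval b else 0) ≠ 0 := hS
    by_cases h : S = ∅
    · simp [h]
    · rw [if_neg h] at hS; exact absurd rfl hS
  | node i t0 t1 ih0 ih1 =>
    obtain ⟨p0, hr0, hb0⟩ := ih0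
    obtain ⟨p1, hr1, hb1⟩ := ih1
    refine ⟨_, rep_node i hr0 hr1, ?_⟩
    intro S hS
    replace hS : p0 S + (if i ∈ S then (p1 S - p0 S) + (p1 (S.erase i) - p0 (S.erase i)) else 0) ≠ 0 := hS
    show S.card ≤ max t0.depth t1.depth + 1
    by_cases hiS : i ∈ S
    · rw [if_pos hiS] at hS
      have hcard : (S.erase i).card = S.card - 1 := Finset.card_erase_of_mem hiS
      have hpos : 1 ≤ S.card := Finset.card_pos.2 ⟨i, hiS⟩
      by_cases h0 : p0 S = 0
      · by_cases h1 : p1 S = 0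
        · by_cases h0e : p0 (S.erase i) = 0
          · have h1e : p1 (S.erase i) ≠ 0 := by
              intro h; rw [h0, h1, h0e, h] at hS; simp at hS
            have := hb1 _ h1e; omega
          · have := hb0 _ h0e; omega
        · have := hb1 _ h1; omega
      · have := hb0 _ h0; omega
    · rw [if_neg hiS, add_zero] at hS
      have := hb0 _ hS; omega

noncomputable def Deg (f : (ι → Bool) → Bool) : ℕ :=
  sInf {d | ∃ p, BRep p f ∧ degBound p d}

lemma deg_set_nonempty (f : (ι → Bool) → Bool) :
    {d | ∃ p, BRep p f ∧ degBound p d}.Nonempty := by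
  obtain ⟨T, hd, hT⟩ := exists_opt_tree f
  obtain ⟨p, hr, hb⟩ := tree_rep T
  refine ⟨T.depth, p, ?_, hb⟩
  intro x
  rw [hr x, hT x]

lemma Deg_spec (f : (ι → Bool) → Bool) : ∃ p, BRep p f ∧ degBound p (Deg f) :=
  Nat.sInf_mem (deg_set_nonempty f)

lemma Deg_le_of {f : (ι → Bool) → Bool} {p : Finset ι → ℤ} {d : ℕ}
    (hr : BRep p f) (hb : degBound p d) : Deg f ≤ d :=
  Nat.sInf_le ⟨p, hr, hb⟩

lemma Deg_le_Dquery (f : (ι → Bool) → Bool) : Deg f ≤ Dquery f := by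
  obtain ⟨T, hd, hT⟩ := exists_opt_tree f
  obtain ⟨p, hr, hb⟩ := tree_rep T
  exact le_trans (Deg_le_of (fun x => by rw [hr x, hT x]) hb) hd

lemma deg_zero_const {f : (ι → Bool) → Bool} (h : Deg f = 0) : ∀ x y, f x = f y := by
  obtain ⟨p, hr, hb⟩ := Deg_spec f
  rw [h] at hb
  have hv : ∀ x, bval (f x) = p ∅ := by
    intro x
    rw [← hr x, Finset.sum_eq_single_of_mem (∅ : Finset ι) (Finset.empty_mem_powerset _)]
    · simp [monom]
    · intro S _ hS
      have : p S = 0 := by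
        by_contra hc
        exact hS (Finset.card_eq_zero.1 (Nat.le_zero.1 (hb S hc)))
      rw [this, zero_mul]
  intro x y
  exact bval_inj ((hv x).trans (hv y).symm)

lemma nonconst_deg_pos {f : (ι → Bool) → Bool} (h : ∃ x y, f x ≠ f y) : 1 ≤ Deg f := by
  by_contra hc
  obtain ⟨x, y, hxy⟩ := h
  exact hxy (deg_zero_const (by omega) x y)

end Aux3

section Aux4
variable {ι : Type} [Fintype ι] [DecidableEq ι]
set_option linter.unusedSectionVars false

def fixedSet (ρ : ι → Option Bool) : Finset ι := univ.filter (fun i => ρ i ≠ none)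

noncomputable def restCoeff (p : Finset ι → ℤ) (ρ : ι → Option Bool) (T : Finset ι) : ℤ :=
  ∑ S ∈ univ.powerset.filter (fun S => S \ fixedSet ρ = T),
    p S * ∏ i ∈ S ∩ fixedSet ρ, bval ((ρ i).getD false)

lemma restCoeff_rep {p : Finset ι → ℤ} {f : (ι → Bool) → Bool} (hp : BRep p f)
    (ρ : ι → Option Bool) : BRep (restCoeff p ρ) (restrictBF f ρ) := by
  intro x
  set F := fixedSet ρ with hF
  set xt : ι → Bool := fun i => (ρ i).getD (x i) with hxt
  have hrhs : bval (restrictBF f ρ x) = bval (f xt) := rfl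
  rw [hrhs, ← hp xt]
  have step1 : ∀ T ∈ univ.powerset, restCoeff p ρ T * monom T x
      = ∑ S ∈ univ.powerset.filter (fun S => S \ F = T),
          p S * (∏ i ∈ S ∩ F, bval ((ρ i).getD false)) * monom (S \ F) x := by
    intro T _
    rw [restCoeff, Finset.sum_mul]
    apply Finset.sum_congr rfl
    intro S hS
    rw [Finset.mem_filter] at hS
    rw [hS.2]
  rw [Finset.sum_congr rfl step1,
    Finset.sum_fiberwise_of_maps_to (fun S hS => Finset.mem_powerset.2 (Finset.subset_univ _))]
  apply Finset.sum_congr rfl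
  intro S _
  have hsplit : monom S xt = (∏ i ∈ S ∩ F, bval (xt i)) * ∏ i ∈ S \ F, bval (xt i) :=
    (Finset.prod_inter_mul_prod_diff S F _).symm
  have h1 : ∏ i ∈ S ∩ F, bval (xt i) = ∏ i ∈ S ∩ F, bval ((ρ i).getD false) := by
    apply Finset.prod_congr rfl
    intro i hi
    have : ρ i ≠ none := by
      have := (Finset.mem_inter.1 hi).2
      rw [hF, fixedSet, Finset.mem_filter] at this
      exact this.2
    rcases Option.ne_none_iff_exists'.1 this with ⟨b, hb⟩
    simp [hxt, hb]
  have h2 : ∏ i ∈ S \ F, bval (xt i) = monom (S \ F) x := by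
    apply Finset.prod_congr rfl
    intro i hi
    have : ρ i = none := by
      have hm := (Finset.mem_sdiff.1 hi).2
      rw [hF, fixedSet, Finset.mem_filter] at hm
      push_neg at hm
      by_contra hc
      exact hc (hm (Finset.mem_univ i))
    simp [hxt, this]
  rw [hsplit, h1, h2]
  ring

lemma restCoeff_bound {p : Finset ι → ℤ} {d : ℕ} (hb : degBound p d) (ρ : ι → Option Bool) :
    degBound (restCoeff p ρ) d := by
  intro T hT
  obtain ⟨S, hS, hne⟩ := Finset.exists_ne_zero_of_sum_ne_zero hT
  rw [Finset.mem_filter] at hS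
  have hp : p S ≠ 0 := by
    intro h; rw [h, zero_mul] at hne; exact hne rfl
  calc T.card = (S \ fixedSet ρ).card := by rw [hS.2]
    _ ≤ S.card := Finset.card_le_card (Finset.sdiff_subset)
    _ ≤ d := hb S hp

lemma Deg_restrict_le (f : (ι → Bool) → Bool) (ρ : ι → Option Bool) :
    Deg (restrictBF f ρ) ≤ Deg f := by
  obtain ⟨p, hr, hb⟩ := Deg_spec f
  exact Deg_le_of (restCoeff_rep hr ρ) (restCoeff_bound hb ρ)

/-- restriction leaving exactly `M` free, fixing everything else to `z` -/
def mrho (M : Finset ι) (z : ι → Bool) : ι → Option Bool :=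
  fun i => if i ∈ M then none else some (z i)

lemma fixedSet_mrho (M : Finset ι) (z : ι → Bool) : fixedSet (mrho M z) = univ \ M := by
  ext i
  by_cases h : i ∈ M <;> simp [fixedSet, mrho, h]

lemma sdiff_fixed_mrho (M S : Finset ι) (z : ι → Bool) :
    S \ fixedSet (mrho M z) = S ∩ M := by
  rw [fixedSet_mrho]
  ext i
  simp only [Finset.mem_sdiff, Finset.mem_inter, Finset.mem_univ, true_and]
  tauto

lemma restCoeff_mrho_top {p : Finset ι → ℤ} {M : Finset ι} (hb : degBound p M.card)
    (z : ι → Bool) : restCoeff (p := p) (mrho M z) M = p M := by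
  rw [restCoeff]
  rw [Finset.sum_eq_single_of_mem M]
  · have : M ∩ fixedSet (mrho M z) = ∅ := by
      rw [fixedSet_mrho]
      ext i; simp
    rw [this, Finset.prod_empty, mul_one]
  · rw [Finset.mem_filter]
    refine ⟨Finset.mem_powerset.2 (Finset.subset_univ _), ?_⟩
    rw [sdiff_fixed_mrho, Finset.inter_self]
  · intro S hS hSne
    rw [Finset.mem_filter, sdiff_fixed_mrho] at hS
    have hMS : M ⊆ S := by
      have := hS.2
      intro i hi
      have : i ∈ S ∩ M := by rw [hS.2]; exact hi
      exact (Finset.mem_inter.1 this).1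
    have hlt : M.card < S.card := Finset.card_lt_card (lt_of_le_of_ne hMS (fun h => hSne h.symm))
    have : p S = 0 := by
      by_contra hc
      exact absurd (hb S hc) (by omega)
    rw [this, zero_mul]

lemma Deg_mrho_ge {p : Finset ι → ℤ} {f : (ι → Bool) → Bool} {M : Finset ι}
    (hp : BRep p f) (hb : degBound p (Deg f)) (hM : p M ≠ 0) (hc : M.card = Deg f)
    (z : ι → Bool) : Deg f ≤ Deg (restrictBF f (mrho M z)) := by
  by_contra hcon
  push_neg at hcon
  obtain ⟨q, hq, hqb⟩ := Deg_spec (restrictBF f (mrho M z))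
  have heq := rep_unique (restCoeff_rep hp (mrho M z)) hq
  have hb' : degBound p M.card := hc ▸ hb
  have h1 : restCoeff (p := p) (mrho M z) M = p M := restCoeff_mrho_top hb' z
  have h2 : q M = 0 := by
    by_contra hne
    have := hqb M hne
    omega
  rw [congrFun heq M, h2] at h1
  exact hM h1.symm

lemma exists_maxonomial {f : (ι → Bool) → Bool} (h : 1 ≤ Deg f) :
    ∃ (p : Finset ι → ℤ) (M : Finset ι),
      BRep p f ∧ degBound p (Deg f) ∧ p M ≠ 0 ∧ M.card = Deg f := by
  obtain ⟨p, hr, hb⟩ := Deg_spec f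
  by_cases hM : ∃ M, p M ≠ 0 ∧ M.card = Deg f
  · obtain ⟨M, h1, h2⟩ := hM
    exact ⟨p, M, hr, hb, h1, h2⟩
  · push_neg at hM
    have hb' : degBound p (Deg f - 1) := by
      intro S hS
      have h1 := hb S hS
      have h2 := hM S hS
      omega
    have := Deg_le_of hr hb'
    omega

lemma maxonomial_block {p : Finset ι → ℤ} {f : (ι → Bool) → Bool} {M : Finset ι}
    (hp : BRep p f) (hb : degBound p (Deg f)) (hM : p M ≠ 0) (hc : M.card = Deg f)
    (hpos : 1 ≤ Deg f) (z : ι → Bool) :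
    ∃ B ⊆ M, f (flipSet z B) ≠ f z := by
  by_contra hcon
  push_neg at hcon
  have hconst : ∀ y, restrictBF f (mrho M z) y = f z := by
    intro y
    have key : (fun i => (mrho M z i).getD (y i)) = flipSet z (M.filter (fun i => y i ≠ z i)) := by
      funext i
      by_cases hiM : i ∈ M
      · simp only [mrho, if_pos hiM, Option.getD_none, flipSet]
        by_cases hyz : y i = z i
        · rw [if_neg (by simp [hiM, hyz]), hyz]
        · rw [if_pos (by simp [hiM, hyz])]
          cases hz : z i <;> cases hy : y i <;> simp_all
      · simp only [mrho, if_neg hiM, Option.getD_some, flipSet]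
        rw [if_neg (by simp [hiM])]
    rw [restrictBF]
    rw [key]
    exact hcon _ (Finset.filter_subset _ _)
  have hg : BRep (fun S => if S = (∅ : Finset ι) then bval (f z) else 0)
      (restrictBF f (mrho M z)) := by
    intro x
    rw [hconst x]
    exact rep_const (f z) x
  have heq := rep_unique (restCoeff_rep hp (mrho M z)) hg
  have hb' : degBound p M.card := hc ▸ hb
  have h1 : restCoeff (p := p) (mrho M z) M = p M := restCoeff_mrho_top hb' z
  have hMne : M ≠ ∅ := by
    intro h
    rw [h, Finset.card_empty] at hc
    omega
  rw [congrFun heq M, if_neg hMne] at h1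
  exact hM h1.symm

end Aux4

section Aux5
variable {ι : Type} [Fintype ι] [DecidableEq ι]
set_option linter.unusedSectionVars false

lemma flipSet_empty (x : ι → Bool) : flipSet x (∅ : Finset ι) = x := by
  funext i; simp [flipSet]

lemma sensAt_le_bsAt (f : (ι → Bool) → Bool) (x : ι → Bool) : sensAt f x ≤ bsAt f x := by
  set A := univ.filter (fun i => f (flipSet x {i}) ≠ f x) with hA
  have e := A.equivFin
  apply le_bsAt f x (fun j : Fin (sensAt f x) => {(e.symm ⟨j, by exact j.2⟩ : A).1})
  · intro j
    have hmem := (e.symm ⟨j, by exact j.2⟩).2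
    exact (Finset.mem_filter.1 hmem).2
  · intro j₁ j₂ hne
    rw [Finset.disjoint_left]
    intro a ha1 ha2
    rw [Finset.mem_singleton] at ha1 ha2
    apply hne
    have : (e.symm ⟨j₁, by exact j₁.2⟩ : A)
         = (e.symm ⟨j₂, by exact j₂.2⟩ : A) := Subtype.ext (ha1.symm.trans ha2)
    have := e.symm.injective this
    exact Fin.ext (congrArg Fin.val this)

lemma flip_flip_erase (x : ι → Bool) (C : Finset ι) {i : ι} (hi : i ∈ C) :
    flipSet (flipSet x C) {i} = flipSet x (C.erase i) := by
  funext j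
  by_cases hj : j = i
  · subst hj; simp [flipSet, hi]
  · by_cases hjC : j ∈ C <;> simp [flipSet, hj, hjC]

/-- every sensitive block contains a minimal sensitive sub-block of size ≤ sens f -/
lemma exists_min_block {f : (ι → Bool) → Bool} {x : ι → Bool} {B : Finset ι}
    (hB : f (flipSet x B) ≠ f x) :
    ∃ C ⊆ B, f (flipSet x C) ≠ f x ∧ C.card ≤ sens f := by
  obtain ⟨C, hCmem, hCmin⟩ := Finset.exists_min_image
    (B.powerset.filter (fun C => f (flipSet x C) ≠ f x)) Finset.card
    ⟨B, by simp [hB]⟩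
  rw [Finset.mem_filter, Finset.mem_powerset] at hCmem
  refine ⟨C, hCmem.1, hCmem.2, ?_⟩
  set z := flipSet x C with hz
  have hsen : ∀ i ∈ C, f (flipSet z {i}) ≠ f z := by
    intro i hi
    rw [flip_flip_erase x C hi]
    have herase : f (flipSet x (C.erase i)) = f x := by
      by_contra hc
      have hmem : C.erase i ∈ B.powerset.filter (fun C => f (flipSet x C) ≠ f x) := by
        rw [Finset.mem_filter, Finset.mem_powerset]
        exact ⟨(Finset.erase_subset _ _).trans hCmem.1, hc⟩
      have := hCmin _ hmem
      have := Finset.card_erase_of_mem hi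
      have : 1 ≤ C.card := Finset.card_pos.2 ⟨i, hi⟩
      omega
    rw [herase]
    exact fun h => hCmem.2 h.symm
  have hsub : C ⊆ univ.filter (fun i => f (flipSet z {i}) ≠ f z) := by
    intro i hi
    rw [Finset.mem_filter]
    exact ⟨Finset.mem_univ i, hsen i hi⟩
  calc C.card ≤ (univ.filter (fun i => f (flipSet z {i}) ≠ f z)).card := Finset.card_le_card hsub
    _ = sensAt f z := rfl
    _ ≤ sens f := Finset.le_sup (Finset.mem_univ z)

/-- evaluating a `mrho` restriction on a flip inside the free set -/
lemma mrho_flip (f : (ι → Bool) → Bool) (U : Finset ι) (w : ι → Bool) {B : Finset ι}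
    (hBU : B ⊆ U) : restrictBF f (mrho U w) (flipSet w B) = f (flipSet w B) := by
  show f _ = _
  congr 1
  funext i
  by_cases hiU : i ∈ U
  · simp [mrho, hiU]
  · simp only [mrho, if_neg hiU, Option.getD_some, flipSet]
    rw [if_neg (fun h => hiU (hBU h))]

lemma mrho_base (f : (ι → Bool) → Bool) (U : Finset ι) (w : ι → Bool) :
    restrictBF f (mrho U w) w = f w := by
  have := mrho_flip f U w (Finset.empty_subset U)
  rwa [flipSet_empty] at this

/-- general transfer: if `ρ` fixes exactly the complement of the unset coords,
flips inside the unset coords transfer -/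
lemma restrict_flip_transfer (f : (ι → Bool) → Bool) (ρ : ι → Option Bool) (x : ι → Bool)
    {C : Finset ι} (hC : ∀ i ∈ C, ρ i = none) :
    restrictBF f ρ (flipSet x C) = f (flipSet (fun i => (ρ i).getD (x i)) C) := by
  show f _ = _
  congr 1
  funext i
  by_cases hiC : i ∈ C
  · rw [hC i hiC]
    simp [flipSet, hiC, hC i hiC]
  · simp only [flipSet, if_neg hiC]

/-- sing/omerge machinery for querying variable lists -/
def omerge (σ ρ : ι → Option Bool) : ι → Option Bool :=
  fun i => match σ i with
  | some b => some b
  | none => ρ i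

lemma restrict_restrict (f : (ι → Bool) → Bool) (σ ρ : ι → Option Bool) :
    restrictBF (restrictBF f σ) ρ = restrictBF f (omerge σ ρ) := by
  funext x
  show f _ = f _
  congr 1
  funext i
  cases h : σ i <;> simp [omerge, h]

lemma omerge_none (σ ρ : ι → Option Bool) (i : ι) :
    omerge σ ρ i = none ↔ σ i = none ∧ ρ i = none := by
  cases h : σ i <;> simp [omerge, h]

lemma Dquery_node (f : (ι → Bool) → Bool) (i : ι) :
    Dquery f ≤ max (Dquery (restrictBF f (sing i false))) (Dquery (restrictBF f (sing i true))) + 1 := by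
  obtain ⟨T0, hd0, hT0⟩ := exists_opt_tree (restrictBF f (sing i false))
  obtain ⟨T1, hd1, hT1⟩ := exists_opt_tree (restrictBF f (sing i true))
  have heval : ∀ x, (DTree.node i T0 T1).eval x = f x := by
    intro x
    have key : ∀ b : Bool, x i = b → restrictBF f (sing i b) x = f x := by
      intro b hb
      show f _ = f x
      congr 1
      funext j
      by_cases hji : j = i
      · subst hji; simp [sing, hb]
      · simp [sing, hji]
    show (if x i then T1.eval x else T0.eval x) = f x
    by_cases hb : x i
    · rw [if_pos hb, hT1]; exact key true hb
    · rw [if_neg hb, hT0]; exact key false (by simpa using hb)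
  refine le_trans (Dquery_le_of_tree _ heval) ?_
  show max T0.depth T1.depth + 1 ≤ _
  omega

lemma query_list (l : List ι) (f : (ι → Bool) → Bool) (m : ℕ)
    (h : ∀ ρ : ι → Option Bool, (∀ i, ρ i = none ↔ i ∉ l) → Dquery (restrictBF f ρ) ≤ m) :
    Dquery f ≤ m + l.length := by
  induction l generalizing f with
  | nil =>
    have := h (fun _ => none) (by simp)
    simpa [show restrictBF f (fun _ => none) = f from rfl] using this
  | cons i l ih =>
    have hb : ∀ b : Bool, Dquery (restrictBF f (sing i b)) ≤ m + l.length := by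
      intro b
      apply ih
      intro ρ hρ
      rw [restrict_restrict]
      apply h
      intro j
      rw [omerge_none]
      constructor
      · rintro ⟨h1, h2⟩
        simp only [List.mem_cons]
        push_neg
        refine ⟨?_, (hρ j).1 h2⟩
        intro hji
        rw [hji] at h1
        simp [sing] at h1
      · intro hj
        simp only [List.mem_cons] at hj
        push_neg at hj
        exact ⟨by simp [sing, hj.1], (hρ j).2 hj.2⟩
    have := Dquery_node f i
    have h0 := hb false
    have h1 := hb true
    simp only [List.length_cons]
    omega

lemma bs_zero_const {f : (ι → Bool) → Bool} (h : blockSens f = 0) : ∀ x y, f x = f y := by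
  intro x y
  by_contra hne
  set B := univ.filter (fun i => x i ≠ y i) with hB
  have hflip : flipSet x B = y := by
    funext i
    by_cases hxy : x i = y i
    · simp [flipSet, hB, hxy]
    · simp only [flipSet, hB, Finset.mem_filter, Finset.mem_univ, true_and]
      rw [if_pos hxy]
      cases hx : x i <;> cases hy : y i <;> simp_all
  have h1 : (1 : ℕ) ≤ bsAt f x := by
    apply le_bsAt f x (fun _ => B)
    · intro j; rw [hflip]; exact fun hc => hne hc.symm
    · intro j₁ j₂ hj; exact absurd (Subsingleton.elim j₁ j₂) hj
  have hle : bsAt f x ≤ blockSens f :=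
    Finset.le_sup (f := fun x => bsAt f x) (Finset.mem_univ x)
  omega

lemma const_Dquery_zero {f : (ι → Bool) → Bool} (h : ∀ x y, f x = f y) : Dquery f = 0 :=
  Nat.le_zero.1 (Dquery_le_of_tree (DTree.leaf (f (fun _ => false))) (fun x => h _ x))

/-- block sensitivity drops by one when fixing a maxonomial -/
lemma bs_restrict_lt {f : (ι → Bool) → Bool} {M : Finset ι}
    (hblock : ∀ z : ι → Bool, ∃ B ⊆ M, f (flipSet z B) ≠ f z)
    (ρ : ι → Option Bool) (hsupp : ∀ i, ρ i = none ↔ i ∉ M) :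
    blockSens (restrictBF f ρ) + 1 ≤ blockSens f := by
  set g := restrictBF f ρ with hg
  obtain ⟨x, -, hx⟩ := Finset.exists_mem_eq_sup (univ : Finset (ι → Bool))
    Finset.univ_nonempty (fun x => bsAt g x)
  set xt : ι → Bool := fun i => (ρ i).getD (x i) with hxt
  obtain ⟨B, hB1, hB2⟩ := bsAt_spec g x
  obtain ⟨B0, hB0M, hB0⟩ := hblock xt
  have htrans : ∀ C : Finset ι, Disjoint C M → g (flipSet x C) = f (flipSet xt C) := by
    intro C hCM
    apply restrict_flip_transfer
    intro i hi
    exact (hsupp i).2 (Finset.disjoint_left.1 hCM hi)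
  have hgx : g x = f xt := by
    have := htrans ∅ (Finset.disjoint_empty_left M)
    rwa [flipSet_empty, flipSet_empty] at this
  have hclean : ∀ j, g (flipSet x (B j)) = g (flipSet x (B j \ M)) := by
    intro j
    show f _ = f _
    congr 1
    funext i
    by_cases hiM : i ∈ M
    · have : ρ i ≠ none := fun hc => ((hsupp i).1 hc) hiM
      rcases Option.ne_none_iff_exists'.1 this with ⟨b, hb⟩
      simp [hb]
    · have hni : ρ i = none := (hsupp i).2 hiM
      simp only [hni, Option.getD_none]
      by_cases hiB : i ∈ B j <;> simp [flipSet, Finset.mem_sdiff, hiM, hiB]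
  -- new family at xt
  set G : Fin (bsAt g x + 1) → Finset ι := Fin.cons B0 (fun j => B j \ M) with hG
  have hGsen : ∀ j, f (flipSet xt (G j)) ≠ f xt := by
    intro j
    rcases Fin.eq_zero_or_eq_succ j with h1 | ⟨k1, h1⟩ <;> subst h1
    · rw [hG, Fin.cons_zero]
      exact hB0
    · rw [hG, Fin.cons_succ]
      have hd : Disjoint (B k1 \ M) M := Finset.sdiff_disjoint
      rw [← htrans _ hd, ← hclean k1, ← hgx]
      exact hB1 k1
  have hzs : ∀ j : Fin (bsAt g x), Disjoint B0 (B j \ M) := by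
    intro j
    rw [Finset.disjoint_left]
    intro a ha1 ha2
    exact (Finset.mem_sdiff.1 ha2).2 (hB0M ha1)
  have hGdis : ∀ j₁ j₂, j₁ ≠ j₂ → Disjoint (G j₁) (G j₂) := by
    intro j₁ j₂ hne
    rcases Fin.eq_zero_or_eq_succ j₁ with h1 | ⟨k1, h1⟩ <;>
      rcases Fin.eq_zero_or_eq_succ j₂ with h2 | ⟨k2, h2⟩ <;> subst h1 <;> subst h2
    · exact absurd rfl hne
    · simp only [hG, Fin.cons_zero, Fin.cons_succ]
      exact hzs k2
    · simp only [hG, Fin.cons_zero, Fin.cons_succ]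
      exact (hzs k1).symm
    · simp only [hG, Fin.cons_succ]
      have hk : k1 ≠ k2 := fun h => hne (by rw [h])
      exact Finset.disjoint_of_subset_left Finset.sdiff_subset
        (Finset.disjoint_of_subset_right Finset.sdiff_subset (hB2 k1 k2 hk))
  have hle : bsAt g x + 1 ≤ bsAt f xt := le_bsAt f xt G hGsen hGdis
  have hfin : bsAt f xt ≤ blockSens f := Finset.le_sup (Finset.mem_univ xt)
  rw [show blockSens g = bsAt g x from hx]
  omega

lemma mid_aux (k : ℕ) : ∀ (d : ℕ) (f : (ι → Bool) → Bool),
    blockSens f ≤ k → Deg f ≤ d → Dquery f ≤ k * d := by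
  induction k with
  | zero =>
    intro d f hbs _
    rw [const_Dquery_zero (bs_zero_const (Nat.le_zero.1 hbs))]
    omega
  | succ k ih =>
    intro d f hbs hdeg
    by_cases hconst : ∀ x y, f x = f y
    · rw [const_Dquery_zero hconst]; omega
    · push_neg at hconst
      have hpos : 1 ≤ Deg f := nonconst_deg_pos hconst
      obtain ⟨p, M, hr, hbd, hM, hMc⟩ := exists_maxonomial hpos
      have hblock : ∀ z : ι → Bool, ∃ B ⊆ M, f (flipSet z B) ≠ f z :=
        fun z => maxonomial_block hr hbd hM hMc hpos z
      have hql := query_list M.toList f (k * d) ?_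
      · have hlen : M.toList.length = M.card := Finset.length_toList M
        have : M.card ≤ d := by omega
        calc Dquery f ≤ k * d + M.toList.length := hql
          _ ≤ k * d + d := by omega
          _ = (k + 1) * d := by ring
      · intro ρ hρ
        have hsupp : ∀ i, ρ i = none ↔ i ∉ M := by
          intro i
          rw [hρ i, Finset.mem_toList]
        apply ih d
        · have := bs_restrict_lt hblock ρ hsupp
          omega
        · exact le_trans (Deg_restrict_le f ρ) hdeg

theorem Dquery_le_bs_mul_deg (f : (ι → Bool) → Bool) :
    Dquery f ≤ blockSens f * Deg f :=
  mid_aux (blockSens f) (Deg f) f le_rfl le_rfl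

end Aux5

section Aux6
variable {ι : Type} [Fintype ι] [DecidableEq ι]
set_option linter.unusedSectionVars false

lemma unsetCard_mrho (M : Finset ι) (z : ι → Bool) : unsetCard (mrho M z) = M.card := by
  rw [unsetCard]
  congr 1
  ext i
  by_cases h : i ∈ M <;> simp [mrho, h]

lemma sens_le_blockSens (f : (ι → Bool) → Bool) : sens f ≤ blockSens f :=
  Finset.sup_mono_fun (fun x _ => sensAt_le_bsAt f x)

lemma Dquery_restrict_ge_bsAt (f : (ι → Bool) → Bool) (ρ : ι → Option Bool) (x : ι → Bool) :
    bsAt (restrictBF f ρ) x ≤ Dquery (restrictBF f ρ) := bsAt_le_Dquery _ x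

end Aux6


/-- for every `f` there is a restriction with `O(D(f))` unset
variables such that `D(f|_ρ) = Ω(√(D(f)))`. -/
theorem D_lossy_condensation :
    ∃ c₁ c₂ : ℝ, 0 < c₁ ∧ 0 < c₂ ∧
      ∀ (n : ℕ) (f : (Fin n → Bool) → Bool),
        ∃ ρ : Fin n → Option Bool,
          (unsetCard ρ : ℝ) ≤ c₁ * (Dquery f : ℝ) ∧
          c₂ * Real.sqrt (Dquery f) ≤ (Dquery (restrictBF f ρ) : ℝ) := by
  refine ⟨4, 1, by norm_num, by norm_num, ?_⟩
  intro n f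
  by_cases hd0 : Dquery f = 0
  · refine ⟨fun _ => some false, ?_, ?_⟩
    · have h1 : unsetCard (fun _ : Fin n => some false) = 0 := by simp [unsetCard]
      rw [h1, hd0]
      norm_num
    · rw [hd0]
      simp
  · have hd1 : 1 ≤ Dquery f := Nat.one_le_iff_ne_zero.2 hd0
    have hdR : (1 : ℝ) ≤ (Dquery f : ℝ) := by exact_mod_cast hd1
    set rd := Real.sqrt (Dquery f) with hrd
    have hrd0 : 0 ≤ rd := Real.sqrt_nonneg _
    have hrd1 : 1 ≤ rd := by
      rw [hrd, show (1:ℝ) = Real.sqrt 1 from (Real.sqrt_one).symm]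
      exact Real.sqrt_le_sqrt hdR
    have hrdsq : rd * rd = (Dquery f : ℝ) := Real.mul_self_sqrt (Nat.cast_nonneg _)
    by_cases hcase1 : rd ≤ (Deg f : ℝ)
    · -- degree condensation
      have hdegpos : 1 ≤ Deg f := by
        have h1 : (1:ℝ) ≤ (Deg f : ℝ) := le_trans hrd1 hcase1
        exact_mod_cast h1
      obtain ⟨p, M, hr, hbd, hM, hMc⟩ := exists_maxonomial hdegpos
      refine ⟨mrho M (fun _ => false), ?_, ?_⟩
      · rw [unsetCard_mrho, hMc]
        have h1 : Deg f ≤ Dquery f := Deg_le_Dquery f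
        have h2 : (Deg f : ℝ) ≤ (Dquery f : ℝ) := by exact_mod_cast h1
        have h3 : (0:ℝ) ≤ (Dquery f : ℝ) := Nat.cast_nonneg _
        linarith
      · rw [one_mul]
        have h1 : Deg f ≤ Deg (restrictBF f (mrho M (fun _ => false))) :=
          Deg_mrho_ge hr hbd hM hMc _
        have h2 := Deg_le_Dquery (restrictBF f (mrho M (fun _ => false)))
        have : Deg f ≤ Dquery (restrictBF f (mrho M (fun _ => false))) := le_trans h1 h2
        have h3 : (Deg f : ℝ) ≤ (Dquery (restrictBF f (mrho M (fun _ => false))) : ℝ) := by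
          exact_mod_cast this
        linarith
    · by_cases hcase2 : rd ≤ (sens f : ℝ)
      · -- sensitivity condensation
        obtain ⟨x, -, hx⟩ := Finset.exists_mem_eq_sup (univ : Finset (Fin n → Bool))
          Finset.univ_nonempty (fun x => sensAt f x)
        set A := univ.filter (fun i => f (flipSet x {i}) ≠ f x) with hA
        have hsx : sens f = sensAt f x := hx
        have hAcard : A.card = sens f := by rw [hsx]; rfl
        refine ⟨mrho A x, ?_, ?_⟩
        · rw [unsetCard_mrho, hAcard]
          have h1 : sens f ≤ Dquery f :=
            le_trans (sens_le_blockSens f) (blockSens_le_Dquery f)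
          have h2 : (sens f : ℝ) ≤ (Dquery f : ℝ) := by exact_mod_cast h1
          have h3 : (0:ℝ) ≤ (Dquery f : ℝ) := Nat.cast_nonneg _
          linarith
        · rw [one_mul]
          set g := restrictBF f (mrho A x) with hg
          have hsub : A ⊆ univ.filter (fun i => g (flipSet x {i}) ≠ g x) := by
            intro i hi
            rw [Finset.mem_filter]
            refine ⟨Finset.mem_univ i, ?_⟩
            rw [hg, mrho_flip f A x (Finset.singleton_subset_iff.2 hi), mrho_base f A x]
            exact (Finset.mem_filter.1 hi).2
          have h1 : A.card ≤ sensAt g x := Finset.card_le_card hsub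
          have h2 : sensAt g x ≤ bsAt g x := sensAt_le_bsAt g x
          have h3 : bsAt g x ≤ Dquery g := bsAt_le_Dquery g x
          have h4 : sens f ≤ Dquery g := by rw [← hAcard]; omega
          have h5 : (sens f : ℝ) ≤ (Dquery g : ℝ) := by exact_mod_cast h4
          linarith [hcase2]
      · -- block sensitivity condensation
        push_neg at hcase1 hcase2
        have hmid := Dquery_le_bs_mul_deg f
        have hmidR : (Dquery f : ℝ) ≤ (blockSens f : ℝ) * (Deg f : ℝ) := by
          exact_mod_cast hmid
        have hbsR : rd ≤ (blockSens f : ℝ) := by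
          have hb0 : (0:ℝ) ≤ (blockSens f : ℝ) := Nat.cast_nonneg _
          have h1 : (blockSens f : ℝ) * (Deg f : ℝ) ≤ (blockSens f : ℝ) * rd :=
            mul_le_mul_of_nonneg_left (le_of_lt hcase1) hb0
          have h2 : rd * rd ≤ (blockSens f : ℝ) * rd := by
            rw [hrdsq]; exact le_trans hmidR h1
          have hrdpos : 0 < rd := lt_of_lt_of_le one_pos hrd1
          exact le_of_mul_le_mul_right h2 hrdpos
        set k := ⌈rd⌉₊ with hk
        have hkbs : k ≤ blockSens f := Nat.ceil_le.2 hbsR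
        obtain ⟨x, -, hx⟩ := Finset.exists_mem_eq_sup (univ : Finset (Fin n → Bool))
          Finset.univ_nonempty (fun x => bsAt f x)
        have hkx : k ≤ bsAt f x := by rw [← hx]; exact hkbs
        obtain ⟨B, hB1, hB2⟩ := bsAt_spec f x
        set emb : Fin k → Fin (bsAt f x) := Fin.castLE hkx with hemb
        have hCex := fun j : Fin k => exists_min_block (hB1 (emb j))
        choose C hC1 hC2 hC3 using hCex
        set U := Finset.univ.biUnion (fun j : Fin k => C j) with hU
        refine ⟨mrho U x, ?_, ?_⟩
        · rw [unsetCard_mrho]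
          have h1 : U.card ≤ ∑ j : Fin k, (C j).card := Finset.card_biUnion_le
          have h2 : ∑ j : Fin k, (C j).card ≤ k * sens f := by
            calc ∑ j : Fin k, (C j).card ≤ ∑ _j : Fin k, sens f :=
              Finset.sum_le_sum (fun j _ => hC3 j)
              _ = k * sens f := by rw [Finset.sum_const, Finset.card_univ, Fintype.card_fin,
                smul_eq_mul]
          have hUk : (U.card : ℝ) ≤ (k : ℝ) * (sens f : ℝ) := by
            have : U.card ≤ k * sens f := le_trans h1 h2
            exact_mod_cast this
          have hkR : (k : ℝ) ≤ rd + 1 := le_of_lt (Nat.ceil_lt_add_one hrd0)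
          have hsR : (sens f : ℝ) ≤ rd := le_of_lt hcase2
          have hs0 : (0:ℝ) ≤ (sens f : ℝ) := Nat.cast_nonneg _
          have hrdd : rd ≤ (Dquery f : ℝ) := by nlinarith
          calc (U.card : ℝ) ≤ (k : ℝ) * (sens f : ℝ) := hUk
            _ ≤ (rd + 1) * rd := by nlinarith
            _ ≤ 4 * (Dquery f : ℝ) := by nlinarith
        · rw [one_mul]
          set g := restrictBF f (mrho U x) with hg
          have hCU : ∀ j, C j ⊆ U := by
            intro j
            rw [hU]
            exact Finset.subset_biUnion_of_mem _ (Finset.mem_univ j)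
          have hsen : ∀ j : Fin k, g (flipSet x (C j)) ≠ g x := by
            intro j
            rw [hg, mrho_flip f U x (hCU j), mrho_base f U x]
            exact hC2 j
          have hdis : ∀ j₁ j₂ : Fin k, j₁ ≠ j₂ → Disjoint (C j₁) (C j₂) := by
            intro j₁ j₂ hne
            have hne' : emb j₁ ≠ emb j₂ := fun h => hne (Fin.castLE_injective hkx h)
            exact Finset.disjoint_of_subset_left (hC1 j₁)
              (Finset.disjoint_of_subset_right (hC1 j₂) (hB2 _ _ hne'))
          have h1 : k ≤ bsAt g x := le_bsAt g x C hsen hdis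
          have h2 : k ≤ Dquery g := le_trans h1 (bsAt_le_Dquery g x)
          have h3 : (k : ℝ) ≤ (Dquery g : ℝ) := by exact_mod_cast h2
          have h4 : rd ≤ (k : ℝ) := Nat.le_ceil rd
          linarith
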